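/- If a bipartite undirected graph A with fixed bipartition A₁ ⊔ A₂ has the asymmetric Sidorenko property, then A has the Sidorenko property: for every undirected graph H, t(A, H) ≥ t(K₂, H)^{e(A)}, where t(A, H) is the fraction of all maps V(A) → V(H) that are graph homomorphisms and t(K₂, H) = 2·e(H)/v(H)². -/
import Mathlib


open MeasureTheory Filter Topology

/-- Homomorphism density between finite directed graphs: the number of maps
`V(A) → V(G)` that are homomorphisms, divided by `v(G)^{v(A)}`. -/
noncomputable def homDensity {α β : Type} [Fintype α] [Fintype β]
    (A : α → α → Prop) (G : β → β → Prop) : ℝ :=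
  (Nat.card {f : α → β // ∀ x y, A x y → G (f x) (f y)} : ℝ) /
    (Fintype.card β : ℝ) ^ (Fintype.card α)

/-- Number of edges of a directed graph. -/
noncomputable def edgeCount {α : Type} [Fintype α] (A : α → α → Prop) : ℕ :=
  Nat.card {p : α × α // A p.1 p.2}

/-- The oriented graph `K2→`: two vertices, one directed edge. -/
def K2dir : Fin 2 → Fin 2 → Prop := fun i j => i = 0 ∧ j = 1

/-- A directed graph is an oriented graph: no self-loops and, for each pair of
distinct vertices, at most one of the two possible directed edges. -/
def IsOriented {α : Type} (A : α → α → Prop) : Prop :=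
  (∀ x, ¬ A x x) ∧ ∀ x y, A x y → ¬ A y x

open Classical in
/-- Graphon homomorphism density of a directed graph `A` in `W`:
`t(A, W) = ∫_{[0,1]^{V(A)}} ∏_{(i,j) ∈ E(A)} W(x_i, x_j) ∏ dx_i`. -/
noncomputable def graphonDensity {α : Type} [Fintype α]
    (A : α → α → Prop) (W : ℝ → ℝ → ℝ) : ℝ :=
  ∫ x : α → ℝ in Set.univ.pi fun _ => Set.Icc (0:ℝ) 1,
    ∏ p : α × α, if A p.1 p.2 then W (x p.1) (x p.2) else 1

open Classical in
/-- Bipartite graphon homomorphism density of the bipartite graph with parts `α₁, α₂`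
and edge relation `E` in the graphon `W`. -/
noncomputable def bipGraphonDensity {α₁ α₂ : Type} [Fintype α₁] [Fintype α₂]
    (E : α₁ → α₂ → Prop) (W : ℝ → ℝ → ℝ) : ℝ :=
  ∫ xy : (α₁ → ℝ) × (α₂ → ℝ) in
      (Set.univ.pi fun _ => Set.Icc (0:ℝ) 1) ×ˢ (Set.univ.pi fun _ => Set.Icc (0:ℝ) 1),
    ∏ p : α₁ × α₂, if E p.1 p.2 then W (xy.1 p.1) (xy.2 p.2) else 1

/-- Number of edges of a bipartite graph with fixed bipartition. -/
noncomputable def bipEdgeCount {α₁ α₂ : Type} [Fintype α₁] [Fintype α₂]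
    (E : α₁ → α₂ → Prop) : ℕ :=
  Nat.card {p : α₁ × α₂ // E p.1 p.2}

/-- The directed graph obtained from a bipartite graph (with parts `α₁, α₂` and
edge relation `E`) by orienting every edge from the first part to the second. -/
def orient {α₁ α₂ : Type} (E : α₁ → α₂ → Prop) : (α₁ ⊕ α₂) → (α₁ ⊕ α₂) → Prop :=
  fun u v => match u, v with
  | Sum.inl a, Sum.inr b => E a b
  | _, _ => False

/-- Bipartite homomorphism density between finite bipartite graphs: the fraction of
part-respecting vertex maps that are homomorphisms. -/
noncomputable def bipHomDensity {α₁ α₂ : Type} [Fintype α₁] [Fintype α₂] {n m : ℕ}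
    (E : α₁ → α₂ → Prop) (F : Fin n → Fin m → Prop) : ℝ :=
  (Nat.card {fg : (α₁ → Fin n) × (α₂ → Fin m) // ∀ a b, E a b → F (fg.1 a) (fg.2 b)} : ℝ) /
    ((n : ℝ) ^ (Fintype.card α₁) * (m : ℝ) ^ (Fintype.card α₂))

/-- The asymmetric Sidorenko property for a bipartite graph with fixed bipartition:
for every (nonempty) bipartite graph `H` with parts `U₁, U₂` and edge set `F`, the
fraction of part-respecting maps that are homomorphisms is at least
`(|F|/(|U₁||U₂|))^{e(A)}`. -/
def AsymSidorenko {α₁ α₂ : Type} [Fintype α₁] [Fintype α₂] (E : α₁ → α₂ → Prop) : Prop :=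
  ∀ (n m : ℕ), 0 < n → 0 < m → ∀ F : Fin n → Fin m → Prop,
    bipHomDensity E F ≥
      ((Nat.card {p : Fin n × Fin m // F p.1 p.2} : ℝ) / ((n : ℝ) * m)) ^ bipEdgeCount E

/-- Undirected homomorphism density between finite simple graphs: the fraction of all
vertex maps that are graph homomorphisms. -/
noncomputable def uHomDensity {α β : Type} [Fintype α] [Fintype β]
    (A : SimpleGraph α) (H : SimpleGraph β) : ℝ :=
  (Nat.card {f : α → β // ∀ x y, A.Adj x y → H.Adj (f x) (f y)} : ℝ) /
    (Fintype.card β : ℝ) ^ (Fintype.card α)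

/-- The bipartite graph with parts `α₁, α₂` and edge relation `E`, viewed as an
undirected simple graph on the vertex set `α₁ ⊕ α₂`. -/
def bipToSimple {α₁ α₂ : Type} (E : α₁ → α₂ → Prop) : SimpleGraph (α₁ ⊕ α₂) :=
  SimpleGraph.fromRel (orient E)

/-- If a bipartite graph `A` with fixed bipartition (parts `α₁, α₂`,
edge relation `E`) has the asymmetric Sidorenko property, then `A` has the Sidorenko
property: for every (nonempty) undirected graph `H`,
`t(A, H) ≥ t(K₂, H)^{e(A)}`, where `t(K₂, H) = 2 e(H)/v(H)²` is the number of ordered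
adjacent pairs of `H` divided by `v(H)²`. -/
theorem asymSidorenko_implies_sidorenko
    {α₁ α₂ : Type} [Fintype α₁] [Fintype α₂] (E : α₁ → α₂ → Prop)
    (h : AsymSidorenko E) :
    ∀ (n : ℕ), 0 < n → ∀ H : SimpleGraph (Fin n),
      uHomDensity (bipToSimple E) H ≥
        ((Nat.card {q : Fin n × Fin n // H.Adj q.1 q.2} : ℝ) / (n : ℝ) ^ 2)
          ^ bipEdgeCount E := by
  intro n hn H
  have key := h n n hn hn H.Adj
  have hcard : Nat.card {f : α₁ ⊕ α₂ → Fin n // ∀ x y, (bipToSimple E).Adj x y → H.Adj (f x) (f y)}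
      = Nat.card {fg : (α₁ → Fin n) × (α₂ → Fin n) // ∀ a b, E a b → H.Adj (fg.1 a) (fg.2 b)} := by
    apply Nat.card_congr
    refine Equiv.subtypeEquiv (Equiv.sumArrowEquivProdArrow α₁ α₂ (Fin n)) ?_
    intro f
    simp only [Equiv.sumArrowEquivProdArrow, Equiv.coe_fn_mk]
    constructor
    · intro hf a b hab
      exact hf _ _ (by simp [bipToSimple, SimpleGraph.fromRel_adj, orient, hab])
    · intro hf x y hxy
      rcases x with a | b <;> rcases y with a' | b' <;>
        simp only [bipToSimple, SimpleGraph.fromRel_adj, orient] at hxy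
      · tauto
      · exact hf a b' (by tauto)
      · exact (hf a' b (by tauto)).symm
      · tauto
  unfold uHomDensity
  unfold bipHomDensity at key
  rw [hcard]
  have hpow : ((Fintype.card (Fin n) : ℝ)) ^ Fintype.card (α₁ ⊕ α₂)
      = (n : ℝ) ^ Fintype.card α₁ * (n : ℝ) ^ Fintype.card α₂ := by
    simp [Fintype.card_sum, pow_add]
  rw [hpow]
  have hn2 : (n : ℝ) ^ 2 = (n : ℝ) * n := sq (n : ℝ) ▸ rfl
  rw [hn2]
  exact key
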